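/- Let k and d ≥ 2 be positive integers and set ρ(k,d) = (2(d−1)²(2d−1)^{2d−2})^{k−1}. Let G be a K_{1,d}-free graph with V(G) = V(P) ∪ A, where P is an induced path of G and A = N(P) is an independent set of cardinality at least ρ(k,d). Then there exist B = {b₁, b₂, …, b_k} ⊆ A and a subpath Q of P such that the sets {N(bᵢ) ∩ V(Q)}_{i∈[k]} appear in order along Q. -/

import Mathlib

open SimpleGraph

/-- A set of vertices is independent in `G`. -/
def IsIndep {V : Type} (G : SimpleGraph V) (S : Set V) : Prop :=
  ∀ u ∈ S, ∀ v ∈ S, u ≠ v → ¬ G.Adj u v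

/-- The independence number of the subgraph of `G` induced by `S`. -/
noncomputable def alphaSet {V : Type} [Fintype V] (G : SimpleGraph V) (S : Set V) : ℕ :=
  sSup {n : ℕ | ∃ I : Finset V, ↑I ⊆ S ∧ IsIndep G ↑I ∧ I.card = n}

/-- The open neighborhood of a vertex set `X`. -/
def nbr {V : Type} (G : SimpleGraph V) (X : Set V) : Set V :=
  {v | v ∉ X ∧ ∃ x ∈ X, G.Adj v x}

/-- The closed neighborhood of a vertex set `X`. -/
def clNbr {V : Type} (G : SimpleGraph V) (X : Set V) : Set V :=
  X ∪ nbr G X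

/-- Two vertex sets `X`, `Y` are adjacent if `N[X] ∩ Y ≠ ∅`. -/
def SetsAdj {V : Type} (G : SimpleGraph V) (X Y : Set V) : Prop :=
  (clNbr G X ∩ Y).Nonempty

/-- `G` has no induced subgraph isomorphic to the star `K_{1,d}`. -/
def K1dFree {V : Type} (d : ℕ) (G : SimpleGraph V) : Prop :=
  IsEmpty (completeBipartiteGraph (Fin 1) (Fin d) ↪g G)

/-- `H` is an induced minor of `G` (obtained by vertex deletions and edge contractions),
witnessed by a family of nonempty, connected, pairwise disjoint branch sets. -/
def InducedMinor {V W : Type} (G : SimpleGraph V) (H : SimpleGraph W) : Prop :=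
  ∃ φ : W → Set V,
    (∀ w, (G.induce (φ w)).Connected) ∧
    (∀ w₁ w₂, w₁ ≠ w₂ → Disjoint (φ w₁) (φ w₂)) ∧
    (∀ w₁ w₂, w₁ ≠ w₂ → (H.Adj w₁ w₂ ↔ ∃ u ∈ φ w₁, ∃ v ∈ φ w₂, G.Adj u v))

/-- A tree-decomposition of `G`. -/
structure TreeDecomp {V : Type} (G : SimpleGraph V) where
  n : ℕ
  T : SimpleGraph (Fin n)
  conn : T.Connected
  acyc : T.IsAcyclic
  bag : Fin n → Set V
  bag_vertex : ∀ v : V, ∃ t, v ∈ bag t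
  bag_edge : ∀ u v : V, G.Adj u v → ∃ t, u ∈ bag t ∧ v ∈ bag t
  bag_subtree : ∀ v : V, (T.induce {t | v ∈ bag t}).Connected

/-- The tree-independence number of a finite graph `G`. -/
noncomputable def atw {V : Type} [Fintype V] (G : SimpleGraph V) : ℕ :=
  sInf {c : ℕ | ∃ D : TreeDecomp G, ∀ t : Fin D.n, alphaSet G (D.bag t) ≤ c}

/-- `S` is a separator between `X` and `Y`: there is no path with one endpoint in `X`,
the other endpoint in `Y`, and all internal vertices outside `S ∪ X ∪ Y`. -/
def Separates {V : Type} (G : SimpleGraph V) (X Y S : Set V) : Prop :=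
  ¬ ∃ (x y : V) (w : G.Walk x y), x ∈ X ∧ y ∈ Y ∧ w.IsPath ∧
      ∀ v ∈ w.support, v ≠ x → v ≠ y → v ∉ S ∧ v ∉ X ∧ v ∉ Y

/-- `f 0, …, f (n-1)` are the vertices, in order, of an induced path in `G`. -/
def IsIndPathOn {V : Type} (G : SimpleGraph V) (f : ℕ → V) (n : ℕ) : Prop :=
  (∀ a b, a < n → b < n → f a = f b → a = b) ∧
  (∀ a b, a < n → b < n → (G.Adj (f a) (f b) ↔ (a + 1 = b ∨ b + 1 = a)))

/-- The vertex set of the path (or cycle) `f 0, …, f (n-1)`. -/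
def pathSet {V : Type} (f : ℕ → V) (n : ℕ) : Set V := f '' {a | a < n}

/-- `f 0, …, f (n-1)` are the vertices, in cyclic order, of an induced cycle in `G`. -/
def IsIndCycleOn {V : Type} (G : SimpleGraph V) (f : ℕ → V) (n : ℕ) : Prop :=
  3 ≤ n ∧ (∀ a b, a < n → b < n → f a = f b → a = b) ∧
  (∀ a b, a < n → b < n → (G.Adj (f a) (f b) ↔ ((a + 1) % n = b ∨ (b + 1) % n = a)))

/-- The sets `A 0, …, A (k-1)` appear in order along the path `f 0, …, f (n-1)`:
they are nonempty and there are indices `0 = x 0 < x 1 < … < x k = n` such that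
`A i` is contained in the block `f (x i), …, f (x (i+1) - 1)`. -/
def AppearInOrderAlong {V : Type} (f : ℕ → V) (n k : ℕ) (A : ℕ → Set V) : Prop :=
  (∀ i < k, (A i).Nonempty) ∧
  ∃ x : ℕ → ℕ, x 0 = 0 ∧ x k = n ∧ (∀ i < k, x i < x (i + 1)) ∧
    ∀ i < k, A i ⊆ f '' {a | x i ≤ a ∧ a < x (i + 1)}

/-- The `k`-ladder: two disjoint paths with `k` vertices each, the `i`-th vertices joined. -/
def ladderGraph (k : ℕ) : SimpleGraph (Fin 2 × Fin k) :=
  SimpleGraph.fromRel fun p q =>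
    (p.1 = q.1 ∧ p.2.val + 1 = q.2.val) ∨ (p.2 = q.2 ∧ p.1 ≠ q.1)

/-- The `k`-skinny ladder: the `k`-ladder with every rung subdivided exactly once. -/
def skinnyLadder (k : ℕ) : SimpleGraph ((Fin 2 × Fin k) ⊕ Fin k) :=
  SimpleGraph.fromRel fun p q =>
    match p, q with
    | Sum.inl (i, a), Sum.inl (j, b) => i = j ∧ a.val + 1 = b.val
    | Sum.inl (_, a), Sum.inr b => a = b
    | _, _ => False

/-- The wheel `W_ℓ`: a cycle on `ℓ` vertices plus a hub joined to all of them. -/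
def wheelGraph (ℓ : ℕ) : SimpleGraph (Fin ℓ ⊕ Unit) :=
  SimpleGraph.fromRel fun p q =>
    match p, q with
    | Sum.inl a, Sum.inl b => (a.val + 1) % ℓ = b.val
    | Sum.inl _, Sum.inr _ => True
    | _, _ => False

/-- The theta graph with two ends and three internally disjoint paths having
`a`, `b`, `c ≥ 1` internal vertices respectively (so lengths `a+1`, `b+1`, `c+1`). -/
def thetaGraph (a b c : ℕ) : SimpleGraph (Fin 2 ⊕ (Fin a ⊕ Fin b ⊕ Fin c)) :=
  SimpleGraph.fromRel fun p q =>
    match p, q with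
    | Sum.inl u, Sum.inr (Sum.inl x) => (u = 0 ∧ x.val = 0) ∨ (u = 1 ∧ x.val = a - 1)
    | Sum.inl u, Sum.inr (Sum.inr (Sum.inl x)) => (u = 0 ∧ x.val = 0) ∨ (u = 1 ∧ x.val = b - 1)
    | Sum.inl u, Sum.inr (Sum.inr (Sum.inr x)) => (u = 0 ∧ x.val = 0) ∨ (u = 1 ∧ x.val = c - 1)
    | Sum.inr (Sum.inl x), Sum.inr (Sum.inl y) => x.val + 1 = y.val
    | Sum.inr (Sum.inr (Sum.inl x)), Sum.inr (Sum.inr (Sum.inl y)) => x.val + 1 = y.val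
    | Sum.inr (Sum.inr (Sum.inr x)), Sum.inr (Sum.inr (Sum.inr y)) => x.val + 1 = y.val
    | _, _ => False

/-- The prism graph with two triangles `v₁v₂v₃`, `w₁w₂w₃` and three disjoint paths having
`a`, `b`, `c` internal vertices respectively (so lengths `a+1`, `b+1`, `c+1`). -/
def prismGraph (a b c : ℕ) : SimpleGraph (Fin 3 ⊕ (Fin 3 ⊕ (Fin a ⊕ Fin b ⊕ Fin c))) :=
  SimpleGraph.fromRel fun p q =>
    match p, q with
    | Sum.inl _, Sum.inl _ => True
    | Sum.inr (Sum.inl _), Sum.inr (Sum.inl _) => True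
    | Sum.inl i, Sum.inr (Sum.inl j) =>
        i = j ∧ (if i = (0 : Fin 3) then a = 0 else if i = 1 then b = 0 else c = 0)
    | Sum.inl i, Sum.inr (Sum.inr (Sum.inl x)) => i = 0 ∧ x.val = 0
    | Sum.inl i, Sum.inr (Sum.inr (Sum.inr (Sum.inl x))) => i = 1 ∧ x.val = 0
    | Sum.inl i, Sum.inr (Sum.inr (Sum.inr (Sum.inr x))) => i = 2 ∧ x.val = 0
    | Sum.inr (Sum.inl i), Sum.inr (Sum.inr (Sum.inl x)) => i = 0 ∧ x.val = a - 1
    | Sum.inr (Sum.inl i), Sum.inr (Sum.inr (Sum.inr (Sum.inl x))) => i = 1 ∧ x.val = b - 1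
    | Sum.inr (Sum.inl i), Sum.inr (Sum.inr (Sum.inr (Sum.inr x))) => i = 2 ∧ x.val = c - 1
    | Sum.inr (Sum.inr (Sum.inl x)), Sum.inr (Sum.inr (Sum.inl y)) => x.val + 1 = y.val
    | Sum.inr (Sum.inr (Sum.inr (Sum.inl x))), Sum.inr (Sum.inr (Sum.inr (Sum.inl y))) =>
        x.val + 1 = y.val
    | Sum.inr (Sum.inr (Sum.inr (Sum.inr x))), Sum.inr (Sum.inr (Sum.inr (Sum.inr y))) =>
        x.val + 1 = y.val
    | _, _ => False

/-- `G` contains a `k`-long theta as an induced subgraph. -/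
def ContainsLongTheta {V : Type} (G : SimpleGraph V) (k : ℕ) : Prop :=
  ∃ a b c : ℕ, 1 ≤ a ∧ 1 ≤ b ∧ 1 ≤ c ∧ k ≤ a + 1 ∧ k ≤ b + 1 ∧ k ≤ c + 1 ∧
    Nonempty (thetaGraph a b c ↪g G)

/-- `G` contains a `k`-long prism as an induced subgraph. -/
def ContainsLongPrism {V : Type} (G : SimpleGraph V) (k : ℕ) : Prop :=
  ∃ a b c : ℕ, k ≤ a + 1 ∧ k ≤ b + 1 ∧ k ≤ c + 1 ∧
    Nonempty (prismGraph a b c ↪g G)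

/-- Data for a (shuffled) rope ladder: two rail paths `p₁`, `p₂` (with `n₁`, `n₂` vertices)
and rung paths `φ i` (with `m i` vertices each). -/
structure RopeLadderData (V : Type) where
  n₁ : ℕ
  n₂ : ℕ
  p₁ : ℕ → V
  p₂ : ℕ → V
  m : ℕ → ℕ
  φ : ℕ → ℕ → V

def RopeLadderData.rail₁ {V : Type} (L : RopeLadderData V) : Set V := pathSet L.p₁ L.n₁
def RopeLadderData.rail₂ {V : Type} (L : RopeLadderData V) : Set V := pathSet L.p₂ L.n₂
def RopeLadderData.rung {V : Type} (L : RopeLadderData V) (i : ℕ) : Set V :=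
  pathSet (L.φ i) (L.m i)
/-- The endpoint `φ₁ⁱ` of the `i`-th rung path. -/
def RopeLadderData.top {V : Type} (L : RopeLadderData V) (i : ℕ) : V := L.φ i 0
/-- The endpoint `φ₂ⁱ` of the `i`-th rung path. -/
def RopeLadderData.bot {V : Type} (L : RopeLadderData V) (i : ℕ) : V := L.φ i (L.m i - 1)

/-- The data `L` forms a `k`-shuffled-rope-ladder configuration in `G`. -/
structure IsShuffledConfig {V : Type} (G : SimpleGraph V) (k : ℕ) (L : RopeLadderData V) :
    Prop where
  pos₁ : 0 < L.n₁
  pos₂ : 0 < L.n₂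
  posm : ∀ i < k, 0 < L.m i
  path₁ : IsIndPathOn G L.p₁ L.n₁
  path₂ : IsIndPathOn G L.p₂ L.n₂
  pathr : ∀ i < k, IsIndPathOn G (L.φ i) (L.m i)
  disj₁₂ : Disjoint L.rail₁ L.rail₂
  disj₁r : ∀ i < k, Disjoint L.rail₁ (L.rung i)
  disj₂r : ∀ i < k, Disjoint L.rail₂ (L.rung i)
  disjrr : ∀ i < k, ∀ j < k, i ≠ j → Disjoint (L.rung i) (L.rung j)
  nonadj₁₂ : ¬ SetsAdj G L.rail₁ L.rail₂
  nonadjrr : ∀ i < k, ∀ j < k, i ≠ j → ¬ SetsAdj G (L.rung i) (L.rung j)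
  rung₁eq : ∀ i < k, nbr G (L.rung i) ∩ L.rail₁ = nbr G {L.top i} ∩ L.rail₁
  rung₁ne : ∀ i < k, (nbr G (L.rung i) ∩ L.rail₁).Nonempty
  rung₂eq : ∀ i < k, nbr G (L.rung i) ∩ L.rail₂ = nbr G {L.bot i} ∩ L.rail₂
  rung₂ne : ∀ i < k, (nbr G (L.rung i) ∩ L.rail₂).Nonempty

/-- The data `L` forms a `k`-rope-ladder configuration in `G`: a shuffled configuration whose
rung attachments appear in order along both rails. -/
def IsRopeConfig {V : Type} (G : SimpleGraph V) (k : ℕ) (L : RopeLadderData V) : Prop :=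
  IsShuffledConfig G k L ∧
  AppearInOrderAlong L.p₁ L.n₁ k (fun i => nbr G {L.top i} ∩ L.rail₁) ∧
  AppearInOrderAlong L.p₂ L.n₂ k (fun i => nbr G {L.bot i} ∩ L.rail₂)

/-- Every vertex of the ambient graph lies on one of the paths of `L`. -/
def LadderCovers {V : Type} (k : ℕ) (L : RopeLadderData V) : Prop :=
  ∀ v : V, v ∈ L.rail₁ ∪ L.rail₂ ∪ ⋃ i ∈ Set.Iio k, L.rung i

/-- `G` is (exactly) a `k`-shuffled rope ladder. -/
def IsShuffledRopeLadderGraph {V : Type} (G : SimpleGraph V) (k : ℕ) : Prop :=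
  ∃ L : RopeLadderData V, IsShuffledConfig G k L ∧ LadderCovers k L

/-- `G` is (exactly) a `k`-rope ladder. -/
def IsRopeLadderGraph {V : Type} (G : SimpleGraph V) (k : ℕ) : Prop :=
  ∃ L : RopeLadderData V, IsRopeConfig G k L ∧ LadderCovers k L

/-- A `k`-`H`-rope-ladder configuration in `G`, where the rail subgraph has vertex set `W`,
the rail path is `p` (with `n` vertices) and the rung paths are `φ i` (with `m i` vertices). -/
structure IsHRopeConfig {V : Type} (G : SimpleGraph V) (k : ℕ) (W : Set V)
    (p : ℕ → V) (n : ℕ) (m : ℕ → ℕ) (φ : ℕ → ℕ → V) : Prop where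
  posn : 0 < n
  posm : ∀ i < k, 0 < m i
  pathP : IsIndPathOn G p n
  pathr : ∀ i < k, IsIndPathOn G (φ i) (m i)
  disjWP : Disjoint W (pathSet p n)
  disjWr : ∀ i < k, Disjoint W (pathSet (φ i) (m i))
  disjPr : ∀ i < k, Disjoint (pathSet p n) (pathSet (φ i) (m i))
  disjrr : ∀ i < k, ∀ j < k, i ≠ j → Disjoint (pathSet (φ i) (m i)) (pathSet (φ j) (m j))
  nonadjWP : ¬ SetsAdj G W (pathSet p n)
  nonadjrr : ∀ i < k, ∀ j < k, i ≠ j →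
    ¬ SetsAdj G (pathSet (φ i) (m i)) (pathSet (φ j) (m j))
  rungWeq : ∀ i < k, W ∩ nbr G (pathSet (φ i) (m i)) = W ∩ nbr G {φ i 0}
  rungWne : ∀ i < k, (W ∩ nbr G (pathSet (φ i) (m i))).Nonempty
  rungPeq : ∀ i < k,
    pathSet p n ∩ nbr G (pathSet (φ i) (m i)) = pathSet p n ∩ nbr G {φ i (m i - 1)}
  rungPne : ∀ i < k, (pathSet p n ∩ nbr G (pathSet (φ i) (m i))).Nonempty

/-- `G` is (exactly) a `k`-cycle rope ladder. -/
def IsCycleRopeLadderGraph {V : Type} (G : SimpleGraph V) (k : ℕ) : Prop :=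
  ∃ (c : ℕ → V) (nc : ℕ) (p : ℕ → V) (n : ℕ) (m : ℕ → ℕ) (φ : ℕ → ℕ → V),
    IsIndCycleOn G c nc ∧ IsHRopeConfig G k (pathSet c nc) p n m φ ∧
    ∀ v : V, v ∈ pathSet c nc ∪ pathSet p n ∪ ⋃ i ∈ Set.Iio k, pathSet (φ i) (m i)

/-- A strong bramble: a nonempty family of connected, pairwise intersecting vertex sets. -/
def IsStrongBramble {V : Type} (G : SimpleGraph V) (B : Set (Set V)) : Prop :=
  B.Nonempty ∧ (∀ X ∈ B, (G.induce X).Connected) ∧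
    ∀ X ∈ B, ∀ Y ∈ B, (X ∩ Y).Nonempty

/-- The α-order of a bramble: the minimum independence number of a hitting set. -/
noncomputable def brambleOrder {V : Type} [Fintype V] (G : SimpleGraph V)
    (B : Set (Set V)) : ℕ :=
  sInf {a : ℕ | ∃ X : Set V, (∀ Y ∈ B, (X ∩ Y).Nonempty) ∧ alphaSet G X = a}

/-- Every connected component of `S` is a tripod (a tree with at most three leaves). -/
def ComponentsAreTripods {U : Type} [Fintype U] (S : SimpleGraph U) : Prop :=
  S.IsAcyclic ∧ ∀ c : S.ConnectedComponent,
    Set.ncard {v | v ∈ c.supp ∧ Set.ncard {u | S.Adj v u} = 1} ≤ 3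

/-- `ρ(k,d) = (2(d−1)²(2d−1)^{2d−2})^{k−1}`. -/
def rhoFn (k d : ℕ) : ℕ := (2 * (d - 1) ^ 2 * (2 * d - 1) ^ (2 * d - 2)) ^ (k - 1)

/-- `ν(k,d) = ρ(ρ((k−1)²+1, d), d)`. -/
def nuFn (k d : ℕ) : ℕ := rhoFn (rhoFn ((k - 1) ^ 2 + 1) d) d


private lemma starEmb {V : Type} {d : ℕ} {G : SimpleGraph V} (hfree : K1dFree d G)
    (v : V) (g : Fin d → V) (hinj : Function.Injective g)
    (hadj : ∀ i, G.Adj v (g i)) (hnon : ∀ i j : Fin d, i ≠ j → ¬ G.Adj (g i) (g j)) :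
    False := by
  have hvg : ∀ i, v ≠ g i := fun i => (hadj i).ne
  refine hfree.false ?_
  refine ⟨⟨Sum.elim (fun _ => v) g, ?_⟩, ?_⟩
  · rintro (i | i) (j | j) h <;> simp only [Sum.elim_inl, Sum.elim_inr] at h
    · exact congrArg Sum.inl (Subsingleton.elim i j)
    · exact absurd h (hvg j)
    · exact absurd h.symm (hvg i)
    · exact congrArg Sum.inr (hinj h)
  · rintro (i | i) (j | j)
    · show G.Adj v v ↔ _
      simp [completeBipartiteGraph]
    · show G.Adj v (g j) ↔ _
      simp [completeBipartiteGraph, hadj j]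
    · show G.Adj (g i) v ↔ _
      simp [completeBipartiteGraph, (hadj i).symm]
    · show G.Adj (g i) (g j) ↔ _
      by_cases hij : i = j
      · subst hij; simp [completeBipartiteGraph]
      · simp [completeBipartiteGraph, hnon i j hij]

private lemma star_deg {V : Type} {d : ℕ} {G : SimpleGraph V} (hfree : K1dFree d G) (hd : 2 ≤ d)
    (v : V) (s : Finset V) (hadj : ∀ a ∈ s, G.Adj v a)
    (hind : ∀ a ∈ s, ∀ b ∈ s, a ≠ b → ¬ G.Adj a b) : s.card ≤ d - 1 := by
  by_contra h
  obtain ⟨t, hts, htc⟩ := Finset.exists_subset_card_eq (show d ≤ s.card by omega)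
  let g : Fin d → V := fun i => (t.equivFin.symm (Fin.cast htc.symm i) : V)
  have hginj : Function.Injective g :=
    Subtype.val_injective.comp (t.equivFin.symm.injective.comp (Fin.cast_injective _))
  exact starEmb hfree v g hginj
    (fun i => hadj _ (hts (t.equivFin.symm (Fin.cast htc.symm i)).2))
    (fun i j hij => hind _ (hts (t.equivFin.symm (Fin.cast htc.symm i)).2)
      _ (hts (t.equivFin.symm (Fin.cast htc.symm j)).2) (fun h => hij (hginj h)))

private lemma star_path {V : Type} {d : ℕ} {G : SimpleGraph V} (hfree : K1dFree d G) (hd : 2 ≤ d)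
    {f : ℕ → V} {n : ℕ} (hP : IsIndPathOn G f n) (a : V)
    (s : Finset ℕ) (hs : ∀ i ∈ s, i < n ∧ G.Adj a (f i)) : s.card ≤ 2 * d - 2 := by
  by_contra h
  obtain ⟨t, hts, htc⟩ := Finset.exists_subset_card_eq (show 2*d - 1 ≤ s.card by omega)
  set e := t.orderEmbOfFin htc with he
  have hmem : ∀ i : Fin (2*d-1), (e i) ∈ s := fun i => hts (t.orderEmbOfFin_mem htc i)
  have hmono : StrictMono e := (t.orderEmbOfFin htc).strictMono
  have key : ∀ (δ : ℕ) (i j : Fin (2*d-1)), (i : ℕ) + δ = (j : ℕ) → e i + δ ≤ e j := by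
    intro δ
    induction δ with
    | zero =>
      intro i j hij
      have : i = j := Fin.ext (by omega)
      subst this; omega
    | succ δ ih =>
      intro i j hij
      have hj' : (i:ℕ) + δ < 2*d-1 := by have := j.isLt; omega
      have h1 := ih i ⟨(i:ℕ) + δ, hj'⟩ rfl
      have h2 : e ⟨(i:ℕ) + δ, hj'⟩ < e j := hmono (by simp [Fin.lt_def]; omega)
      omega
  have hdpos : ∀ i : Fin d, 2*(i:ℕ) < 2*d-1 := fun i => by have := i.isLt; omega
  let E : Fin d → ℕ := fun i => e ⟨2*(i:ℕ), hdpos i⟩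
  have hEgap : ∀ i j : Fin d, (i:ℕ) < (j:ℕ) → E i + 2 ≤ E j := by
    intro i j hij
    have := key (2*(j:ℕ) - 2*(i:ℕ)) ⟨2*(i:ℕ), hdpos i⟩ ⟨2*(j:ℕ), hdpos j⟩ (by simp; omega)
    simp only [E]; omega
  have hElt : ∀ i : Fin d, E i < n := fun i => (hs _ (hmem _)).1
  have hEadj : ∀ i : Fin d, G.Adj a (f (E i)) := fun i => (hs _ (hmem _)).2
  have hne : ∀ i j : Fin d, i ≠ j → ¬ G.Adj (f (E i)) (f (E j)) := by
    intro i j hij hadj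
    rw [(hP.2 (E i) (E j) (hElt i) (hElt j))] at hadj
    rcases Nat.lt_or_ge (i:ℕ) (j:ℕ) with hc | hc
    · have := hEgap i j hc; omega
    · have hc' : (j:ℕ) < (i:ℕ) := by
        rcases Nat.lt_or_ge (j:ℕ) (i:ℕ) with h | h
        · exact h
        · exact absurd (Fin.ext (by omega)) hij
      have := hEgap j i hc'; omega
  have hEinj : Function.Injective (fun i => f (E i)) := by
    intro i j hij
    have hEij : E i = E j := hP.1 _ _ (hElt i) (hElt j) hij
    by_contra hne'
    rcases Nat.lt_or_ge (i:ℕ) (j:ℕ) with hc | hc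
    · have := hEgap i j hc; omega
    · rcases Nat.lt_or_ge (j:ℕ) (i:ℕ) with h | h
      · have := hEgap j i h; omega
      · exact hne' (Fin.ext (by omega))
  exact starEmb hfree a (fun i => f (E i)) hEinj hEadj
    (fun i j hij => hne i j hij)

private lemma top_select {V : Type} [DecidableEq V] (g : V → ℕ) :
    ∀ (M : ℕ) (s : Finset V), M ≤ s.card →
      ∃ T ⊆ s, T.card = M ∧ ∀ a ∈ s, a ∉ T → ∀ t ∈ T, g a ≤ g t := by
  intro M
  induction M with
  | zero => exact fun s _ => ⟨∅, Finset.empty_subset s, rfl, by simp⟩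
  | succ M ih =>
    intro s hM
    obtain ⟨T, hTs, hTc, hTp⟩ := ih s (by omega)
    have hne : (s \ T).Nonempty := by
      rw [← Finset.card_pos, Finset.card_sdiff_of_subset hTs]; omega
    obtain ⟨t₀, ht₀, ht₀max⟩ := Finset.exists_max_image (s \ T) g hne
    rw [Finset.mem_sdiff] at ht₀
    refine ⟨insert t₀ T, ?_, ?_, ?_⟩
    · exact Finset.insert_subset ht₀.1 hTs
    · rw [Finset.card_insert_of_notMem ht₀.2, hTc]
    · intro a ha haT t ht
      rcases Finset.mem_insert.1 ht with rfl | ht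
      · exact ht₀max a (Finset.mem_sdiff.2 ⟨ha, fun h => haT (Finset.mem_insert_of_mem h)⟩)
      · exact hTp a ha (fun h => haT (Finset.mem_insert_of_mem h)) t ht

private lemma inner_step {V : Type} [DecidableEq V] {d M : ℕ} (hM : 1 ≤ M) (hd : 2 ≤ d)
    (R : V → ℕ → Prop) (w : ℕ) (A₁ : Finset V)
    (hstar : ∀ i : ℕ, ∀ s : Finset V, s ⊆ A₁ → (∀ a ∈ s, R a i) → s.card ≤ d - 1)
    (hnbr : ∀ a ∈ A₁, ∃ i < w, R a i)
    (hA : M + d ≤ A₁.card) :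
    (∃ c' : ℕ, ∃ b : V, ∃ T : Finset V,
        c' ≤ w ∧ b ∈ A₁ ∧ T ⊆ A₁ ∧ b ∉ T ∧ M ≤ T.card ∧
        (∃ i < c', R b i) ∧ (∀ i, c' ≤ i → i < w → ¬ R b i) ∧
        (∀ t ∈ T, (∀ i < c', ¬ R t i) ∧ ∃ i, c' ≤ i ∧ i < w ∧ R t i)) ∨
    (∃ c' : ℕ, c' < w ∧ ∃ A₂ : Finset V, A₂ ⊆ A₁ ∧ A₁.card ≤ A₂.card + (M + d - 1) ∧
        (∀ a ∈ A₂, ∃ i < c', R a i) ∧ (∀ a ∈ A₂, ∃ i, c' ≤ i ∧ i < w ∧ R a i)) := by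
  classical
  set wl : V → ℕ := fun a => sInf {i | i < w ∧ R a i} with hwl_def
  have hwl : ∀ a ∈ A₁, wl a < w ∧ R a (wl a) := by
    intro a ha
    obtain ⟨i, hi, hr⟩ := hnbr a ha
    exact Nat.sInf_mem (⟨i, hi, hr⟩ : {i | i < w ∧ R a i}.Nonempty)
  have hwl_min : ∀ (a : V) (i : ℕ), i < w → R a i → wl a ≤ i :=
    fun a i hi hr => Nat.sInf_le ⟨hi, hr⟩
  obtain ⟨T₀, hT₀s, hT₀c, hT₀p⟩ := top_select wl M A₁ (by omega)
  have hT₀ne : T₀.Nonempty := Finset.card_pos.1 (by omega)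
  obtain ⟨t₀, ht₀, ht₀min⟩ := Finset.exists_min_image T₀ wl hT₀ne
  set c' := wl t₀ with hc'def
  have hc'w : c' < w := (hwl t₀ (hT₀s ht₀)).1
  by_cases hb : ∃ b ∈ A₁, ∀ i, c' ≤ i → i < w → ¬ R b i
  · left
    obtain ⟨b, hbA, hbno⟩ := hb
    have hbT₀ : b ∉ T₀ := by
      intro hbT
      have h1 := hwl b (hT₀s hbT)
      exact hbno (wl b) (ht₀min b hbT) h1.1 h1.2
    refine ⟨c', b, T₀, le_of_lt hc'w, hbA, hT₀s, hbT₀, by omega, ?_, hbno, ?_⟩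
    · obtain ⟨i, hi, hr⟩ := hnbr b hbA
      refine ⟨i, ?_, hr⟩
      by_contra hic
      exact hbno i (by omega) hi hr
    · intro t ht
      have hct : c' ≤ wl t := ht₀min t ht
      constructor
      · intro i hic hr
        have := hwl_min t i (by omega) hr
        omega
      · exact ⟨wl t, hct, (hwl t (hT₀s ht)).1, (hwl t (hT₀s ht)).2⟩
  · right
    push_neg at hb
    refine ⟨c', hc'w, A₁.filter (fun a => wl a < c'), Finset.filter_subset _ _, ?_, ?_, ?_⟩
    · -- card bound
      have hsub : A₁ ⊆ (A₁.filter (fun a => wl a < c')) ∪ T₀ ∪ (A₁.filter (fun a => R a c')) := by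
        intro a ha
        rcases Nat.lt_trichotomy (wl a) c' with h | h | h
        · exact Finset.mem_union_left _ (Finset.mem_union_left _ (Finset.mem_filter.2 ⟨ha, h⟩))
        · refine Finset.mem_union_right _ (Finset.mem_filter.2 ⟨ha, ?_⟩)
          have := (hwl a ha).2
          rwa [h] at this
        · refine Finset.mem_union_left _ (Finset.mem_union_right _ ?_)
          by_contra haT
          have := hT₀p a ha haT t₀ ht₀
          omega
      have h1 := Finset.card_le_card hsub
      have h2 := Finset.card_union_le ((A₁.filter (fun a => wl a < c')) ∪ T₀)
        (A₁.filter (fun a => R a c'))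
      have h3 := Finset.card_union_le (A₁.filter (fun a => wl a < c')) T₀
      have h4 : (A₁.filter (fun a => R a c')).card ≤ d - 1 :=
        hstar c' _ (Finset.filter_subset _ _) (fun a ha => (Finset.mem_filter.1 ha).2)
      omega
    · intro a ha
      rw [Finset.mem_filter] at ha
      exact ⟨wl a, ha.2, (hwl a ha.1).2⟩
    · intro a ha
      exact hb a (Finset.mem_filter.1 ha).1

private lemma inner_select {V : Type} [DecidableEq V] {d M : ℕ} (hM : 1 ≤ M) (hd : 2 ≤ d)
    (R : V → ℕ → Prop) (q : ℕ) :
    ∀ (w : ℕ) (A₁ : Finset V),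
      (∀ i : ℕ, ∀ s : Finset V, s ⊆ A₁ → (∀ a ∈ s, R a i) → s.card ≤ d - 1) →
      (∀ a ∈ A₁, ∃ i < w, R a i) →
      (∀ a ∈ A₁, ∀ s : Finset ℕ, (∀ i ∈ s, i < w ∧ R a i) → s.card ≤ q + 1) →
      (q + 1) * (M + d) ≤ A₁.card →
      ∃ w' c' : ℕ, ∃ b : V, ∃ T : Finset V,
        c' ≤ w' ∧ w' ≤ w ∧ b ∈ A₁ ∧ T ⊆ A₁ ∧ b ∉ T ∧ M ≤ T.card ∧
        (∃ i < c', R b i) ∧ (∀ i, c' ≤ i → i < w' → ¬ R b i) ∧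
        (∀ t ∈ T, (∀ i < c', ¬ R t i) ∧ ∃ i, c' ≤ i ∧ i < w' ∧ R t i) := by
  classical
  induction q with
  | zero =>
    intro w A₁ hstar hnbr hcount hcard
    rcases inner_step hM hd R w A₁ hstar hnbr (by omega) with
      ⟨c', b, T, h1, h2, h3, h4, h5, h6, h7, h8⟩ | ⟨c', hc'w, A₂, hsub, hcard2, h1, h2⟩
    · exact ⟨w, c', b, T, h1, le_refl w, h2, h3, h4, h5, h6, h7, h8⟩
    · exfalso
      have hA₂e : A₂ = ∅ := by
        rcases Finset.eq_empty_or_nonempty A₂ with h | ⟨a, ha⟩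
        · exact h
        · exfalso
          obtain ⟨i₁, hi₁, hr₁⟩ := h1 a ha
          obtain ⟨i₂, hi₂c, hi₂w, hr₂⟩ := h2 a ha
          have hcnt := hcount a (hsub ha) {i₁, i₂} (by
            intro i hi
            rcases Finset.mem_insert.1 hi with rfl | hi
            · exact ⟨by omega, hr₁⟩
            · rw [Finset.mem_singleton] at hi; subst hi; exact ⟨hi₂w, hr₂⟩)
          rw [Finset.card_insert_of_notMem (by simp; omega), Finset.card_singleton] at hcnt
          omega
      rw [hA₂e] at hcard2
      simp at hcard2
      omega
  | succ q ih =>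
    intro w A₁ hstar hnbr hcount hcard
    have hMd : M + d ≤ A₁.card := by
      have h : M + d ≤ (q + 1 + 1) * (M + d) :=
        Nat.le_mul_of_pos_left (M + d) (show 0 < q + 1 + 1 by omega)
      omega
    rcases inner_step hM hd R w A₁ hstar hnbr hMd with
      ⟨c', b, T, h1, h2, h3, h4, h5, h6, h7, h8⟩ | ⟨c', hc'w, A₂, hsub, hcard2, h1, h2⟩
    · exact ⟨w, c', b, T, h1, le_refl w, h2, h3, h4, h5, h6, h7, h8⟩
    · have hcard' : (q + 1) * (M + d) ≤ A₂.card := by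
        have e1 : (q + 1 + 1) * (M + d) = (q + 1) * (M + d) + (M + d) := by ring
        omega
      have hcount' : ∀ a ∈ A₂, ∀ s : Finset ℕ, (∀ i ∈ s, i < c' ∧ R a i) → s.card ≤ q + 1 := by
        intro a ha s hs
        obtain ⟨i₂, hi₂c, hi₂w, hr₂⟩ := h2 a ha
        have hi₂s : i₂ ∉ s := fun h => by have := (hs i₂ h).1; omega
        have hcnt := hcount a (hsub ha) (insert i₂ s) (by
          intro i hi
          rcases Finset.mem_insert.1 hi with rfl | hi
          · exact ⟨hi₂w, hr₂⟩
          · exact ⟨by have := (hs i hi).1; omega, (hs i hi).2⟩)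
        rw [Finset.card_insert_of_notMem hi₂s] at hcnt
        omega
      obtain ⟨w', c'', b, T, g1, g2, g3, g4, g5, g6, g7, g8, g9⟩ :=
        ih c' A₂ (fun i s hss => hstar i s (hss.trans hsub)) h1 hcount' hcard'
      exact ⟨w', c'', b, T, g1, by omega, hsub g3, g4.trans hsub, g5, g6, g7, g8, g9⟩

private lemma rho_pos {k d : ℕ} (hd : 2 ≤ d) : 1 ≤ rhoFn k d := by
  have h1 : 0 < 2 * (d - 1) ^ 2 * (2 * d - 1) ^ (2 * d - 2) := by
    have h2 : 0 < d - 1 := by omega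
    have h3 : 0 < 2 * d - 1 := by omega
    positivity
  exact Nat.one_le_iff_ne_zero.2 (pow_ne_zero _ (by omega))

private lemma rho_arith (d k : ℕ) (hd : 2 ≤ d) :
    (2 * d - 2) * (rhoFn (k + 1) d + d) ≤ rhoFn (k + 2) d := by
  obtain ⟨e, rfl⟩ : ∃ e, d = e + 2 := ⟨d - 2, by omega⟩
  unfold rhoFn
  have h1 : 2 * (e + 2) - 2 = 2 * e + 2 := by omega
  have h2 : e + 2 - 1 = e + 1 := by omega
  have h3 : 2 * (e + 2) - 1 = 2 * e + 3 := by omega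
  have h4 : k + 1 - 1 = k := by omega
  have h5 : k + 2 - 1 = k + 1 := by omega
  rw [h1, h2, h3, h4, h5]
  set C := 2 * (e + 1) ^ 2 * (2 * e + 3) ^ (2 * e + 2) with hC
  have hCpos : 1 ≤ C ^ k := Nat.one_le_iff_ne_zero.2 (pow_ne_zero _ (by positivity))
  have hCb : (2 * e + 2) * (e + 3) ≤ C := by
    have hp : (2 * e + 3) ^ 2 ≤ (2 * e + 3) ^ (2 * e + 2) :=
      Nat.pow_le_pow_right (by omega) (by omega)
    have : (2 * e + 2) * (e + 3) ≤ 2 * (e + 1) ^ 2 * (2 * e + 3) ^ 2 := by nlinarith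
    calc (2 * e + 2) * (e + 3) ≤ 2 * (e + 1) ^ 2 * (2 * e + 3) ^ 2 := this
      _ ≤ C := by rw [hC]; exact Nat.mul_le_mul_left _ hp
  calc (2 * e + 2) * (C ^ k + (e + 2))
      ≤ (2 * e + 2) * (C ^ k * (e + 3)) := by
        refine Nat.mul_le_mul_left _ ?_
        nlinarith
    _ = ((2 * e + 2) * (e + 3)) * C ^ k := by ring
    _ ≤ C * C ^ k := Nat.mul_le_mul_right _ hCb
    _ = C ^ (k + 1) := by rw [pow_succ]; ring

private lemma main_lemma {V : Type} [DecidableEq V] {d : ℕ} (hd : 2 ≤ d)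
    {G : SimpleGraph V} (hfree : K1dFree d G) :
    ∀ (k : ℕ) (f : ℕ → V) (n : ℕ), IsIndPathOn G f n →
      ∀ A : Finset V,
        (∀ a ∈ A, ∀ b ∈ A, a ≠ b → ¬ G.Adj a b) →
        (∀ a ∈ A, ∀ i < n, a ≠ f i) →
        (∀ a ∈ A, ∃ i < n, G.Adj a (f i)) →
        rhoFn (k + 1) d ≤ A.card →
        ∃ b : ℕ → V, (∀ i < k + 1, b i ∈ A) ∧
          (∀ i < k + 1, ∀ j < k + 1, b i = b j → i = j) ∧
          ∃ m ≤ n, AppearInOrderAlong f m (k + 1)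
            (fun i => {u | u ∈ pathSet f m ∧ G.Adj (b i) u}) := by
  intro k
  induction k with
  | zero =>
    intro f n hP A hindep hdisj hnbr hcard
    have h1 : 1 ≤ A.card := by
      have h0 : rhoFn (0 + 1) d = 1 := by simp [rhoFn]
      omega
    obtain ⟨a, ha⟩ := Finset.card_pos.1 h1
    obtain ⟨i₀, hi₀, hadj⟩ := hnbr a ha
    refine ⟨fun _ => a, fun _ _ => ha, fun i hi j hj _ => by omega, i₀ + 1, by omega, ?_, ?_⟩
    · intro i hi
      exact ⟨f i₀, ⟨i₀, by simp, rfl⟩, hadj⟩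
    · refine ⟨fun j => if j = 0 then 0 else i₀ + 1, by simp, by simp, ?_, ?_⟩
      · intro i hi
        have : i = 0 := by omega
        subst this; simp
      · intro i hi u hu
        obtain ⟨hu1, _⟩ := hu
        obtain ⟨a', ha', rfl⟩ := hu1
        have : i = 0 := by omega
        subst this
        exact ⟨a', by simp at ha' ⊢; omega, rfl⟩
  | succ k ih =>
    intro f n hP A hindep hdisj hnbr hcard
    set M := rhoFn (k + 1) d with hMdef
    have hM : 1 ≤ M := rho_pos hd
    -- apply inner_select with R a i := G.Adj a (f i), q := 2*d-3, w := n
    have hq1 : 2 * d - 3 + 1 = 2 * d - 2 := by omega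
    obtain ⟨w', c', b, T, hc'w', hw'n, hbA, hTA, hbT, hTcard, ⟨i₀, hi₀c, hi₀R⟩, hbno, hTprop⟩ :=
      inner_select (d := d) (M := M) hM hd (fun a i => G.Adj a (f i)) (2 * d - 3) n A
        (fun i s hsub hall => star_deg hfree hd (f i) s (fun a ha => (hall a ha).symm)
          (fun a ha b hb hab => hindep a (hsub ha) b (hsub hb) hab))
        hnbr
        (fun a ha s hs => by
          have := star_path hfree hd hP a s hs
          omega)
        (by
          have h2 := rho_arith d k hd
          rw [← hMdef] at h2
          have h3 : rhoFn (k + 1 + 1) d ≤ A.card := hcard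
          rw [show k + 1 + 1 = k + 2 from rfl] at h3
          rw [hq1]
          omega)
    -- recurse on the subpath f (c' + ·) of length w' - c'
    set f' : ℕ → V := fun a => f (c' + a) with hf'def
    set n' : ℕ := w' - c' with hn'def
    have hP' : IsIndPathOn G f' n' := by
      constructor
      · intro a b han hbn heq
        have := hP.1 (c' + a) (c' + b) (by omega) (by omega) heq
        omega
      · intro a b han hbn
        rw [hP.2 (c' + a) (c' + b) (by omega) (by omega)]
        omega
    obtain ⟨b', hb'T, hb'inj, m', hm'n', hne', x', hx0, hxk, hxmono, hxsub⟩ :=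
      ih f' n' hP' T
        (fun a ha b hb hab => hindep a (hTA ha) b (hTA hb) hab)
        (fun a ha i hi => hdisj a (hTA ha) (c' + i) (by omega))
        (fun t ht => by
          obtain ⟨i, hci, hiw, hR⟩ := (hTprop t ht).2
          refine ⟨i - c', by omega, ?_⟩
          show G.Adj t (f (c' + (i - c')))
          rw [show c' + (i - c') = i by omega]
          exact hR)
        hTcard
    -- assemble
    have hc'pos : 0 < c' := by omega
    set bb : ℕ → V := fun i => if i = 0 then b else b' (i - 1) with hbbdef
    set xx : ℕ → ℕ := fun j => if j = 0 then 0 else c' + x' (j - 1) with hxxdef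
    have hbb0 : bb 0 = b := rfl
    have hbbS : ∀ i : ℕ, bb (i + 1) = b' i := by
      intro i
      show (if i + 1 = 0 then b else b' (i + 1 - 1)) = b' i
      rw [if_neg (Nat.succ_ne_zero i), Nat.add_sub_cancel]
    have hxx0 : xx 0 = 0 := rfl
    have hxxS : ∀ j : ℕ, xx (j + 1) = c' + x' j := by
      intro j
      show (if j + 1 = 0 then 0 else c' + x' (j + 1 - 1)) = c' + x' j
      rw [if_neg (Nat.succ_ne_zero j), Nat.add_sub_cancel]
    refine ⟨bb, ?_, ?_, c' + m', by omega, ?_, xx, hxx0, ?_, ?_, ?_⟩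
    · -- membership
      intro i hi
      by_cases hi0 : i = 0
      · subst hi0; rw [hbb0]; exact hbA
      · obtain ⟨j, rfl⟩ : ∃ j, i = j + 1 := ⟨i - 1, by omega⟩
        rw [hbbS]
        exact hTA (hb'T j (by omega))
    · -- injectivity
      intro i hi j hj heq
      by_cases hi0 : i = 0 <;> by_cases hj0 : j = 0
      · omega
      · exfalso
        obtain ⟨j', rfl⟩ : ∃ j', j = j' + 1 := ⟨j - 1, by omega⟩
        rw [hi0, hbb0, hbbS] at heq
        exact hbT (heq ▸ hb'T j' (by omega))
      · exfalso
        obtain ⟨i', rfl⟩ : ∃ i', i = i' + 1 := ⟨i - 1, by omega⟩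
        rw [hj0, hbb0, hbbS] at heq
        exact hbT (heq ▸ (hb'T i' (by omega)))
      · obtain ⟨i', rfl⟩ : ∃ i', i = i' + 1 := ⟨i - 1, by omega⟩
        obtain ⟨j', rfl⟩ : ∃ j', j = j' + 1 := ⟨j - 1, by omega⟩
        rw [hbbS, hbbS] at heq
        have := hb'inj i' (by omega) j' (by omega) heq
        omega
    · -- nonempty
      intro i hi
      by_cases hi0 : i = 0
      · subst hi0
        exact ⟨f i₀, ⟨i₀, by simp only [Set.mem_setOf_eq]; omega, rfl⟩, by rw [hbb0]; exact hi₀R⟩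
      · obtain ⟨j, rfl⟩ : ∃ j, i = j + 1 := ⟨i - 1, by omega⟩
        obtain ⟨u, hu1, hu2⟩ := hne' j (by omega)
        obtain ⟨a, ham, hfa⟩ := hu1
        simp only [Set.mem_setOf_eq] at ham
        refine ⟨u, ⟨c' + a, by simp only [Set.mem_setOf_eq]; omega, hfa⟩, ?_⟩
        rw [hbbS]
        exact hu2
    · -- x endpoint
      rw [hxxS, hxk]
    · -- monotonicity
      intro i hi
      by_cases hi0 : i = 0
      · subst hi0
        rw [hxx0, hxxS, hx0]
        omega
      · obtain ⟨j, rfl⟩ : ∃ j, i = j + 1 := ⟨i - 1, by omega⟩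
        rw [hxxS, hxxS]
        have := hxmono j (by omega)
        omega
    · -- block containment
      intro i hi u hu
      obtain ⟨hu1, hu2⟩ := hu
      obtain ⟨a, ham, hfa⟩ := hu1
      simp only [Set.mem_setOf_eq] at ham
      by_cases hi0 : i = 0
      · subst hi0
        rw [hbb0] at hu2
        have hac : a < c' := by
          by_contra hac
          exact hbno a (by omega) (by omega) (hfa ▸ hu2)
        refine ⟨a, ?_, hfa⟩
        simp only [Set.mem_setOf_eq]
        rw [hxx0, hxxS, hx0]
        omega
      · obtain ⟨j, rfl⟩ : ∃ j, i = j + 1 := ⟨i - 1, by omega⟩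
        rw [hbbS] at hu2
        have hca : c' ≤ a := by
          by_contra hca
          exact ((hTprop (b' j) (hb'T j (by omega))).1 a (by omega)) (hfa ▸ hu2)
        have hu' : u ∈ pathSet f' m' := by
          refine ⟨a - c', by simp only [Set.mem_setOf_eq]; omega, ?_⟩
          show f (c' + (a - c')) = u
          rw [show c' + (a - c') = a by omega]
          exact hfa
        obtain ⟨a₂, ⟨ha₂1, ha₂2⟩, hfa₂⟩ := hxsub j (by omega) ⟨hu', hu2⟩
        refine ⟨c' + a₂, ?_, hfa₂⟩
        simp only [Set.mem_setOf_eq]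
        rw [hxxS, hxxS]
        omega

/-- cleaning one side. -/
theorem clean_one_side (k d : ℕ) (hk : 1 ≤ k) (hd : 2 ≤ d)
    (V : Type) [Fintype V] (G : SimpleGraph V) (hfree : K1dFree d G)
    (f : ℕ → V) (n : ℕ) (hn : 0 < n) (hP : IsIndPathOn G f n)
    (A : Set V) (hA : A = nbr G (pathSet f n))
    (hcover : ∀ v : V, v ∈ pathSet f n ∪ A)
    (hindep : IsIndep G A)
    (hcard : rhoFn k d ≤ A.ncard) :
    ∃ b : ℕ → V, (∀ i < k, b i ∈ A) ∧ (∀ i < k, ∀ j < k, b i = b j → i = j) ∧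
      ∃ s m : ℕ, s + m ≤ n ∧
        AppearInOrderAlong (fun a => f (s + a)) m k
          (fun i => {u | u ∈ pathSet (fun a => f (s + a)) m ∧ G.Adj (b i) u}) := by
  
  classical
  obtain ⟨k', rfl⟩ : ∃ k', k = k' + 1 := ⟨k - 1, by omega⟩
  have hfin : A.Finite := Set.toFinite A
  set AF := hfin.toFinset with hAFdef
  have hmem : ∀ a, a ∈ AF ↔ a ∈ A := fun a => Set.Finite.mem_toFinset hfin
  have hindepF : ∀ a ∈ AF, ∀ b ∈ AF, a ≠ b → ¬ G.Adj a b :=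
    fun a ha b hb => hindep a ((hmem a).1 ha) b ((hmem b).1 hb)
  have hdisjF : ∀ a ∈ AF, ∀ i < n, a ≠ f i := by
    intro a ha i hi heq
    have haA : a ∈ A := (hmem a).1 ha
    rw [hA] at haA
    exact haA.1 ⟨i, hi, heq.symm⟩
  have hnbrF : ∀ a ∈ AF, ∃ i < n, G.Adj a (f i) := by
    intro a ha
    have haA : a ∈ A := (hmem a).1 ha
    rw [hA] at haA
    obtain ⟨x, ⟨i, hi, rfl⟩, hadj⟩ := haA.2
    exact ⟨i, hi, hadj⟩
  have hcardF : rhoFn (k' + 1) d ≤ AF.card := by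
    rw [← Set.ncard_eq_toFinset_card A hfin]
    exact hcard
  obtain ⟨b, hbmem, hbinj, m, hm, happ⟩ :=
    main_lemma hd hfree k' f n hP AF hindepF hdisjF hnbrF hcardF
  refine ⟨b, fun i hi => (hmem _).1 (hbmem i hi), hbinj, 0, m, by omega, ?_⟩
  have hfun : (fun a => f (0 + a)) = f := by funext a; rw [Nat.zero_add]
  rw [hfun]
  exact happ
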